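/- There exist a function f : ℝ² → ℝ, symmetric and concave on the probability simplex Ω₂ with f(1,0) = 0, and Bloch parameters 0 ≤ n ≤ 1, 0 ≤ θ ≤ π/2, such that the average coherence of the decomposition D^(m₁) strictly exceeds that of D^(m₂): f(cos²(θ₃/2), sin²(θ₃/2)) > p₂ · f(cos²(θ₄/2), sin²(θ₄/2)). In particular, one may take f(x₀, x₁) = 1 − (2(max(x₀,x₁) − 1/2))^{2k} for a sufficiently large integer k. (Hence no single pure state decomposition attains the minimal average coherence simultaneously for all coherence measures.) -/

import Mathlib

noncomputable section

/-- A symmetric function: invariant under all coordinate permutations. -/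
def SymmetricFn {n : ℕ} (f : (Fin n → ℝ) → ℝ) : Prop :=
  ∀ (σ : Equiv.Perm (Fin n)) (x : Fin n → ℝ), f (x ∘ σ) = f x

lemma cos_half_sq_sub (t : ℝ) :
    Real.cos (t / 2) ^ 2 - Real.sin (t / 2) ^ 2 = Real.cos t := by
  have h := Real.cos_two_mul (t / 2)
  rw [show 2 * (t / 2) = t by ring] at h
  have hs := Real.sin_sq_add_cos_sq (t / 2)
  nlinarith

/-- There exist a symmetric concave coherence function `f` on the probability
simplex with `f(1,0) = 0` and Bloch parameters `(n, θ)` for which the average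
coherence of `D^(m₁)` strictly exceeds that of `D^(m₂)`:
`f(cos²(θ₃/2), sin²(θ₃/2)) > p₂ · f(cos²(θ₄/2), sin²(θ₄/2))`. Hence no single
pure state decomposition attains the minimal average coherence simultaneously
for all coherence measures. -/
theorem exists_f_Dm1_gt_Dm2 :
    ∃ (f : (Fin 2 → ℝ) → ℝ) (n θ : ℝ),
      SymmetricFn f ∧ ConcaveOn ℝ (stdSimplex ℝ (Fin 2)) f ∧ f ![1, 0] = 0 ∧
      0 ≤ n ∧ n ≤ 1 ∧ 0 ≤ θ ∧ θ ≤ Real.pi / 2 ∧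
      (let θ₃ := Real.arccos (Real.sqrt (1 - n ^ 2 * Real.sin θ ^ 2))
       let θ₄ := Real.arccos ((1 + 2 * n * Real.cos θ + n ^ 2 * Real.cos (2 * θ)) /
         (1 + n ^ 2 + 2 * n * Real.cos θ))
       let p₂ : ℝ := (1 + n ^ 2 + 2 * n * Real.cos θ) / (2 * (1 + n * Real.cos θ))
       p₂ * f ![Real.cos (θ₄ / 2) ^ 2, Real.sin (θ₄ / 2) ^ 2] <
         f ![Real.cos (θ₃ / 2) ^ 2, Real.sin (θ₃ / 2) ^ 2]) := by
  set f : (Fin 2 → ℝ) → ℝ := fun x => 1 - (x 0 - x 1) ^ 8 with hf_def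
  have hfeval : ∀ a b : ℝ, f ![a, b] = 1 - (a - b) ^ 8 := by
    intro a b; simp [hf_def]
  refine ⟨f, 1/2, Real.pi/2, ?_, ?_, ?_, by norm_num, by norm_num,
    by positivity, le_refl _, ?_⟩
  · -- symmetry
    intro σ x
    have hcase : σ = Equiv.refl (Fin 2) ∨ σ = Equiv.swap 0 1 := by
      revert σ; decide
    rcases hcase with h | h <;> subst h <;> simp [hf_def, Equiv.swap_apply_def] <;> ring
  · -- concavity
    have h8 : ConvexOn ℝ Set.univ (fun t : ℝ => t ^ 8) :=
      Even.convexOn_pow (by decide)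
    have hg : ConvexOn ℝ Set.univ (fun x : Fin 2 → ℝ => (x 0 - x 1) ^ 8) := by
      have hL := h8.comp_affineMap
        ((LinearMap.proj (R := ℝ) (φ := fun _ : Fin 2 => ℝ) 0 -
          LinearMap.proj (R := ℝ) (φ := fun _ : Fin 2 => ℝ) 1).toAffineMap)
      refine hL.congr ?_
      intro x _; simp
    have hconc : ConcaveOn ℝ Set.univ f := by
      have := hg.neg.add_const 1
      refine this.congr ?_
      intro x _; simp [hf_def]; ring
    exact hconc.subset (Set.subset_univ _) (convex_stdSimplex ℝ (Fin 2))
  · -- f ![1,0] = 0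
    rw [hfeval]; norm_num
  · -- the strict inequality
    intro θ₃ θ₄ p₂
    have hsin : Real.sin (Real.pi / 2) = 1 := Real.sin_pi_div_two
    have hcos : Real.cos (Real.pi / 2) = 0 := Real.cos_pi_div_two
    have hcos2 : Real.cos (2 * (Real.pi / 2)) = -1 := by
      rw [show 2 * (Real.pi / 2) = Real.pi by ring, Real.cos_pi]
    have harg3 : (1 - ((1:ℝ)/2) ^ 2 * Real.sin (Real.pi / 2) ^ 2) = 3 / 4 := by
      rw [hsin]; norm_num
    have hθ₃ : Real.cos θ₃ = Real.sqrt (3 / 4) := by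
      have h : θ₃ = Real.arccos (Real.sqrt (3 / 4)) := by
        show Real.arccos _ = _
        rw [harg3]
      rw [h]
      exact Real.cos_arccos (by have := Real.sqrt_nonneg ((3:ℝ)/4); linarith)
        (by rw [show (1:ℝ) = Real.sqrt 1 by simp]
            exact Real.sqrt_le_sqrt (by norm_num))
    have harg4 : (1 + 2 * ((1:ℝ)/2) * Real.cos (Real.pi / 2) +
        ((1:ℝ)/2) ^ 2 * Real.cos (2 * (Real.pi / 2))) /
        (1 + ((1:ℝ)/2) ^ 2 + 2 * ((1:ℝ)/2) * Real.cos (Real.pi / 2)) = 3 / 5 := by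
      rw [hcos, hcos2]; norm_num
    have hθ₄ : Real.cos θ₄ = 3 / 5 := by
      have h : θ₄ = Real.arccos (3 / 5) := by
        show Real.arccos _ = _
        rw [harg4]
      rw [h]
      exact Real.cos_arccos (by norm_num) (by norm_num)
    have hp₂ : p₂ = 5 / 8 := by
      show (_ : ℝ) / _ = _
      rw [hcos]; norm_num
    have e3 := cos_half_sq_sub θ₃
    have e4 := cos_half_sq_sub θ₄
    rw [hfeval, hfeval, e3, e4, hθ₃, hθ₄, hp₂]
    have h34 : Real.sqrt (3 / 4) ^ 8 = (3 / 4 : ℝ) ^ 4 := by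
      rw [show (8 : ℕ) = 2 * 4 by norm_num, pow_mul, Real.sq_sqrt (by norm_num : (3:ℝ)/4 ≥ 0)]
    rw [h34]
    norm_num
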